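/- arXiv:2305.15364 — 2 statements merged into one kernel-verified Lean document; each statement's English description precedes it below -/
import Mathlib

section
/- Fix T > 0, constant real matrices A (n×n), B (n×m), symmetric Q (n×n), symmetric Q̂ (n×n), S (n×m), symmetric positive definite R (m×m), and vectors η ∈ ℝⁿ, ζ ∈ ℝᵐ, and assume Q̂ is positive semidefinite and Q − S R⁻¹ Sᵀ is positive semidefinite. For a continuous path x : [0,T] → ℝⁿ and u ∈ L²([0,T]; ℝᵐ), define Λ_T(x,u) = ½∫₀ᵀ(⟨Q x(s), x(s)⟩ + 2⟨S u(s), x(s)⟩ + ⟨R u(s), u(s)⟩ − 2⟨η, x(s)⟩ − 2⟨ζ, u(s)⟩) ds + ½⟨Q̂ x(T), x(T)⟩. Let λ ∈ (0,1), and let (x̃,ũ), (x̂,û) be two such path–control pairs. If the set {t ∈ [0,T] : ũ(t) + R⁻¹Sᵀ x̃(t) ≠ û(t) + R⁻¹Sᵀ x̂(t)} has positive Lebesgue measure, then λ Λ_T(x̃,ũ) + (1−λ) Λ_T(x̂,û) > Λ_T(λx̃ + (1−λ)x̂, λũ + (1−λ)û). -/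
open Matrix MeasureTheory intervalIntegral

section AuxHelpers

variable {α : Type*} [MeasurableSpace α] {μ : Measure α}

lemma stmt5_memLp_proj {k : ℕ} {f : α → Fin k → ℝ} (hf : MemLp f 2 μ) (i : Fin k) :
    MemLp (fun a => f a i) 2 μ :=
  (ContinuousLinearMap.proj (R := ℝ) (φ := fun _ : Fin k => ℝ) i).comp_memLp' hf

lemma stmt5_integrable_mul2 {f g : α → ℝ} (hf : MemLp f 2 μ) (hg : MemLp g 2 μ) :
    Integrable (fun a => f a * g a) μ :=
  memLp_one_iff_integrable.mp
    (hg.smul (r := 1) hf)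

lemma stmt5_integrable_quad {k l : ℕ} (M : Matrix (Fin k) (Fin l) ℝ)
    {f : α → Fin l → ℝ} {g : α → Fin k → ℝ}
    (hf : MemLp f 2 μ) (hg : MemLp g 2 μ) :
    Integrable (fun a => M.mulVec (f a) ⬝ᵥ g a) μ := by
  have : (fun a => M.mulVec (f a) ⬝ᵥ g a)
      = fun a => ∑ i, ∑ j, M i j * (f a j * g a i) := by
    funext a
    simp [Matrix.mulVec, dotProduct, Finset.sum_mul, mul_assoc]
  rw [this]
  refine integrable_finset_sum _ fun i _ => integrable_finset_sum _ fun j _ => ?_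
  exact (stmt5_integrable_mul2 (stmt5_memLp_proj hf j) (stmt5_memLp_proj hg i)).const_mul _

end AuxHelpers

lemma stmt5_contOn_memLp {k : ℕ} {T : ℝ} {f : ℝ → Fin k → ℝ}
    (hf : ContinuousOn f (Set.Icc 0 T)) :
    MemLp f 2 (volume.restrict (Set.Icc (0:ℝ) T)) := by
  haveI : IsFiniteMeasure (volume.restrict (Set.Icc (0:ℝ) T)) := by
    constructor
    rw [Measure.restrict_apply_univ]
    exact measure_Icc_lt_top
  obtain ⟨C, hC⟩ := (isCompact_Icc (a := (0:ℝ)) (b := T)).exists_bound_of_continuousOn hf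
  refine MemLp.of_bound (hf.aestronglyMeasurable measurableSet_Icc) C ?_
  rw [ae_restrict_iff' measurableSet_Icc]
  exact Filter.Eventually.of_forall hC

lemma stmt5_memLp_mulVec {k l : ℕ} {μ : Measure ℝ} (M : Matrix (Fin k) (Fin l) ℝ)
    {f : ℝ → Fin l → ℝ} (hf : MemLp f 2 μ) :
    MemLp (fun s => M.mulVec (f s)) 2 μ :=
  (LinearMap.toContinuousLinearMap (Matrix.mulVecLin M)).comp_memLp' hf

lemma stmt5_mulVec_dp {k l : ℕ} (A : Matrix (Fin k) (Fin l) ℝ) (a : Fin l → ℝ) (b : Fin k → ℝ) :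
    A.mulVec a ⬝ᵥ b = a ⬝ᵥ Aᵀ.mulVec b := by
  rw [dotProduct_comm, dotProduct_mulVec, ← mulVec_transpose, dotProduct_comm]

lemma stmt5_conv_id {k l : ℕ} (M : Matrix (Fin k) (Fin l) ℝ) (lam : ℝ)
    (a b : Fin l → ℝ) (c d : Fin k → ℝ) :
    lam * (M.mulVec a ⬝ᵥ c) + (1 - lam) * (M.mulVec b ⬝ᵥ d)
      - M.mulVec (lam • a + (1 - lam) • b) ⬝ᵥ (lam • c + (1 - lam) • d)
    = lam * (1 - lam) * (M.mulVec (a - b) ⬝ᵥ (c - d)) := by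
  simp [Matrix.mulVec_add, Matrix.mulVec_smul, Matrix.mulVec_sub,
    add_dotProduct, smul_dotProduct, dotProduct_add, dotProduct_smul,
    sub_dotProduct, dotProduct_sub, smul_eq_mul]
  ring

lemma stmt5_square_id {n m : ℕ} (Q : Matrix (Fin n) (Fin n) ℝ) (S : Matrix (Fin n) (Fin m) ℝ)
    (R : Matrix (Fin m) (Fin m) ℝ) (hRsymm : R.IsSymm) (hRpd : R.PosDef)
    (dx : Fin n → ℝ) (du : Fin m → ℝ) :
    Q.mulVec dx ⬝ᵥ dx + 2 * (S.mulVec du ⬝ᵥ dx) + R.mulVec du ⬝ᵥ du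
    = (Q - S * R⁻¹ * Sᵀ).mulVec dx ⬝ᵥ dx
      + R.mulVec (du + (R⁻¹ * Sᵀ).mulVec dx) ⬝ᵥ (du + (R⁻¹ * Sᵀ).mulVec dx) := by
  have hinv : R * R⁻¹ = 1 :=
    Matrix.mul_nonsing_inv R ((Matrix.isUnit_iff_isUnit_det R).mp hRpd.isUnit)
  set w := (R⁻¹ * Sᵀ).mulVec dx with hw
  have hRw : R.mulVec w = Sᵀ.mulVec dx := by
    rw [hw, Matrix.mulVec_mulVec, ← Matrix.mul_assoc, hinv, Matrix.one_mul]
  have h1 : R.mulVec du ⬝ᵥ w = S.mulVec du ⬝ᵥ dx := by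
    rw [stmt5_mulVec_dp, hRsymm.eq, hRw, stmt5_mulVec_dp S du dx]
  have h2 : R.mulVec w ⬝ᵥ du = S.mulVec du ⬝ᵥ dx := by
    rw [hRw, dotProduct_comm, stmt5_mulVec_dp S du dx]
  have h3 : (S * R⁻¹ * Sᵀ).mulVec dx ⬝ᵥ dx = R.mulVec w ⬝ᵥ w := by
    rw [hRw, Matrix.mul_assoc, ← Matrix.mulVec_mulVec, ← hw, stmt5_mulVec_dp S w dx,
      dotProduct_comm]
  rw [Matrix.mulVec_add, dotProduct_add, add_dotProduct, add_dotProduct,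
    Matrix.sub_mulVec, sub_dotProduct, h1, h2, h3]
  ring

lemma stmt5_point_id {n m : ℕ} (Q : Matrix (Fin n) (Fin n) ℝ) (S : Matrix (Fin n) (Fin m) ℝ)
    (R : Matrix (Fin m) (Fin m) ℝ) (η : Fin n → ℝ) (ζ : Fin m → ℝ)
    (lam : ℝ) (a b : Fin n → ℝ) (c d : Fin m → ℝ) :
    Q.mulVec (lam • a + (1 - lam) • b) ⬝ᵥ (lam • a + (1 - lam) • b)
      + 2 * (S.mulVec (lam • c + (1 - lam) • d) ⬝ᵥ (lam • a + (1 - lam) • b))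
      + R.mulVec (lam • c + (1 - lam) • d) ⬝ᵥ (lam • c + (1 - lam) • d)
      - 2 * (η ⬝ᵥ (lam • a + (1 - lam) • b)) - 2 * (ζ ⬝ᵥ (lam • c + (1 - lam) • d))
    = lam * (Q.mulVec a ⬝ᵥ a + 2 * (S.mulVec c ⬝ᵥ a) + R.mulVec c ⬝ᵥ c
        - 2 * (η ⬝ᵥ a) - 2 * (ζ ⬝ᵥ c))
      + (1 - lam) * (Q.mulVec b ⬝ᵥ b + 2 * (S.mulVec d ⬝ᵥ b) + R.mulVec d ⬝ᵥ d
        - 2 * (η ⬝ᵥ b) - 2 * (ζ ⬝ᵥ d))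
      - lam * (1 - lam) * (Q.mulVec (a - b) ⬝ᵥ (a - b)
        + 2 * (S.mulVec (c - d) ⬝ᵥ (a - b)) + R.mulVec (c - d) ⬝ᵥ (c - d)) := by
  simp [Matrix.mulVec_add, Matrix.mulVec_smul, Matrix.mulVec_sub,
    add_dotProduct, smul_dotProduct, dotProduct_add, dotProduct_smul,
    sub_dotProduct, dotProduct_sub, smul_eq_mul]
  ring

/-- The risk-sensitive exponent `Λ_T(x,u)` of the paper (deterministic,
pathwise form). -/
noncomputable def LamT {n m : ℕ} (T : ℝ)
    (Q Qhat : Matrix (Fin n) (Fin n) ℝ) (S : Matrix (Fin n) (Fin m) ℝ)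
    (R : Matrix (Fin m) (Fin m) ℝ) (η : Fin n → ℝ) (ζ : Fin m → ℝ)
    (x : ℝ → Fin n → ℝ) (u : ℝ → Fin m → ℝ) : ℝ :=
  (1 / 2) * (∫ s in (0 : ℝ)..T,
      (Q.mulVec (x s) ⬝ᵥ x s + 2 * (S.mulVec (u s) ⬝ᵥ x s)
        + R.mulVec (u s) ⬝ᵥ u s - 2 * (η ⬝ᵥ x s) - 2 * (ζ ⬝ᵥ u s)))
    + (1 / 2) * (Qhat.mulVec (x T) ⬝ᵥ x T)

/-- pathwise strict convexity of `Λ_T` along two path–control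
pairs whose reduced controls `u + R⁻¹Sᵀx` differ on a set of positive
Lebesgue measure, under Assumption 1 of the paper. -/
theorem stmt5 {n m : ℕ} (T : ℝ) (hT : 0 < T)
    (Q Qhat : Matrix (Fin n) (Fin n) ℝ) (S : Matrix (Fin n) (Fin m) ℝ)
    (R : Matrix (Fin m) (Fin m) ℝ)
    (hQsymm : Q.IsSymm) (hQhatsymm : Qhat.IsSymm) (hRsymm : R.IsSymm)
    (hRpd : R.PosDef) (hQhat : Qhat.PosSemidef)
    (hQS : (Q - S * R⁻¹ * Sᵀ).PosSemidef)
    (η : Fin n → ℝ) (ζ : Fin m → ℝ)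
    (lam : ℝ) (hlam : lam ∈ Set.Ioo (0 : ℝ) 1)
    (xt xh : ℝ → Fin n → ℝ)
    (hxt : ContinuousOn xt (Set.Icc 0 T)) (hxh : ContinuousOn xh (Set.Icc 0 T))
    (ut uh : ℝ → Fin m → ℝ)
    (hut : MemLp ut 2 (volume.restrict (Set.Icc (0 : ℝ) T)))
    (huh : MemLp uh 2 (volume.restrict (Set.Icc (0 : ℝ) T)))
    (hdiff : 0 < volume {t ∈ Set.Icc (0 : ℝ) T |
      ut t + (R⁻¹ * Sᵀ).mulVec (xt t) ≠ uh t + (R⁻¹ * Sᵀ).mulVec (xh t)}) :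
    lam * LamT T Q Qhat S R η ζ xt ut + (1 - lam) * LamT T Q Qhat S R η ζ xh uh >
      LamT T Q Qhat S R η ζ
        (fun t => lam • xt t + (1 - lam) • xh t)
        (fun t => lam • ut t + (1 - lam) • uh t) := by
  obtain ⟨hl0, hl1⟩ := hlam
  set μ := volume.restrict (Set.Icc (0 : ℝ) T) with hμ
  haveI : IsFiniteMeasure μ := by
    constructor; rw [hμ, Measure.restrict_apply_univ]; exact measure_Icc_lt_top
  -- Memℒp facts
  have hxt2 : MemLp xt 2 μ := stmt5_contOn_memLp hxt
  have hxh2 : MemLp xh 2 μ := stmt5_contOn_memLp hxh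
  have hdx2 : MemLp (fun s => xt s - xh s) 2 μ := hxt2.sub hxh2
  have hdu2 : MemLp (fun s => ut s - uh s) 2 μ := hut.sub huh
  have hxc2 : MemLp (fun s => lam • xt s + (1 - lam) • xh s) 2 μ :=
    (hxt2.const_smul lam).add (hxh2.const_smul (1 - lam))
  have huc2 : MemLp (fun s => lam • ut s + (1 - lam) • uh s) 2 μ :=
    (hut.const_smul lam).add (huh.const_smul (1 - lam))
  have hv2 : MemLp (fun s => (ut s - uh s) + (R⁻¹ * Sᵀ).mulVec (xt s - xh s)) 2 μ :=
    hdu2.add (stmt5_memLp_mulVec _ hdx2)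
  -- transfer to interval integrability
  have transfer : ∀ {f : ℝ → ℝ}, Integrable f μ → IntervalIntegrable f volume 0 T := by
    intro f hf
    rw [intervalIntegrable_iff, Set.uIoc_of_le hT.le]
    exact MeasureTheory.IntegrableOn.mono_set hf Set.Ioc_subset_Icc_self
  have hInt : ∀ (x : ℝ → Fin n → ℝ) (u : ℝ → Fin m → ℝ),
      MemLp x 2 μ → MemLp u 2 μ →
      IntervalIntegrable (fun s => Q.mulVec (x s) ⬝ᵥ x s + 2 * (S.mulVec (u s) ⬝ᵥ x s)
        + R.mulVec (u s) ⬝ᵥ u s - 2 * (η ⬝ᵥ x s) - 2 * (ζ ⬝ᵥ u s)) volume 0 T := by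
    intro x u hx hu
    have hη : Integrable (fun s => η ⬝ᵥ x s) μ := by
      have := stmt5_integrable_quad (1 : Matrix (Fin n) (Fin n) ℝ)
        (memLp_const (μ := μ) η) hx
      simpa [Matrix.one_mulVec] using this
    have hζ : Integrable (fun s => ζ ⬝ᵥ u s) μ := by
      have := stmt5_integrable_quad (1 : Matrix (Fin m) (Fin m) ℝ)
        (memLp_const (μ := μ) ζ) hu
      simpa [Matrix.one_mulVec] using this
    exact transfer ((((stmt5_integrable_quad Q hx hx).add
      ((stmt5_integrable_quad S hu hx).const_mul 2)).add
      (stmt5_integrable_quad R hu hu)).sub (hη.const_mul 2) |>.sub (hζ.const_mul 2))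
  have hIt := hInt xt ut hxt2 hut
  have hIh := hInt xh uh hxh2 huh
  have hIc := hInt _ _ hxc2 huc2
  -- the quadratic-difference integrand
  have hIF : IntervalIntegrable (fun s => Q.mulVec (xt s - xh s) ⬝ᵥ (xt s - xh s)
      + 2 * (S.mulVec (ut s - uh s) ⬝ᵥ (xt s - xh s))
      + R.mulVec (ut s - uh s) ⬝ᵥ (ut s - uh s)) volume 0 T :=
    transfer (((stmt5_integrable_quad Q hdx2 hdx2).add
      ((stmt5_integrable_quad S hdu2 hdx2).const_mul 2)).add
      (stmt5_integrable_quad R hdu2 hdu2))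
  have hIH : IntervalIntegrable (fun s =>
      R.mulVec ((ut s - uh s) + (R⁻¹ * Sᵀ).mulVec (xt s - xh s)) ⬝ᵥ
        ((ut s - uh s) + (R⁻¹ * Sᵀ).mulVec (xt s - xh s))) volume 0 T :=
    transfer (stmt5_integrable_quad R hv2 hv2)
  -- pointwise comparison F ≥ h ≥ 0
  have hFh : ∀ s : ℝ,
      R.mulVec ((ut s - uh s) + (R⁻¹ * Sᵀ).mulVec (xt s - xh s)) ⬝ᵥ
        ((ut s - uh s) + (R⁻¹ * Sᵀ).mulVec (xt s - xh s))
      ≤ Q.mulVec (xt s - xh s) ⬝ᵥ (xt s - xh s)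
        + 2 * (S.mulVec (ut s - uh s) ⬝ᵥ (xt s - xh s))
        + R.mulVec (ut s - uh s) ⬝ᵥ (ut s - uh s) := by
    intro s
    rw [stmt5_square_id Q S R hRsymm hRpd]
    have h0 : 0 ≤ (Q - S * R⁻¹ * Sᵀ).mulVec (xt s - xh s) ⬝ᵥ (xt s - xh s) := by
      have := hQS.dotProduct_mulVec_nonneg (xt s - xh s)
      simpa [dotProduct_comm] using this
    linarith
  have hh0 : ∀ s : ℝ, 0 ≤
      R.mulVec ((ut s - uh s) + (R⁻¹ * Sᵀ).mulVec (xt s - xh s)) ⬝ᵥ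
        ((ut s - uh s) + (R⁻¹ * Sᵀ).mulVec (xt s - xh s)) := by
    intro s
    have := hRpd.posSemidef.dotProduct_mulVec_nonneg ((ut s - uh s) + (R⁻¹ * Sᵀ).mulVec (xt s - xh s))
    simpa [dotProduct_comm] using this
  -- strict positivity of ∫ h
  have hIntH : 0 < ∫ s in (0:ℝ)..T,
      R.mulVec ((ut s - uh s) + (R⁻¹ * Sᵀ).mulVec (xt s - xh s)) ⬝ᵥ
        ((ut s - uh s) + (R⁻¹ * Sᵀ).mulVec (xt s - xh s)) := by
    rw [intervalIntegral.integral_of_le hT.le]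
    have hIOc : IntegrableOn (fun s =>
        R.mulVec ((ut s - uh s) + (R⁻¹ * Sᵀ).mulVec (xt s - xh s)) ⬝ᵥ
          ((ut s - uh s) + (R⁻¹ * Sᵀ).mulVec (xt s - xh s))) (Set.Ioc 0 T) volume := by
      have := hIH; rwa [intervalIntegrable_iff, Set.uIoc_of_le hT.le] at this
    rw [MeasureTheory.setIntegral_pos_iff_support_of_nonneg_ae
      (Filter.Eventually.of_forall (fun s => hh0 s)) hIOc]
    have hsub : {t ∈ Set.Icc (0:ℝ) T |
        ut t + (R⁻¹ * Sᵀ).mulVec (xt t) ≠ uh t + (R⁻¹ * Sᵀ).mulVec (xh t)}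
        ⊆ (Function.support (fun s =>
            R.mulVec ((ut s - uh s) + (R⁻¹ * Sᵀ).mulVec (xt s - xh s)) ⬝ᵥ
              ((ut s - uh s) + (R⁻¹ * Sᵀ).mulVec (xt s - xh s))) ∩ Set.Ioc 0 T) ∪ {0} := by
      intro t ht
      simp only [Set.mem_setOf_eq] at ht
      obtain ⟨htIcc, htne⟩ := ht
      have hvne : (ut t - uh t) + (R⁻¹ * Sᵀ).mulVec (xt t - xh t) ≠ 0 := by
        have heq : (ut t - uh t) + (R⁻¹ * Sᵀ).mulVec (xt t - xh t)
            = (ut t + (R⁻¹ * Sᵀ).mulVec (xt t)) - (uh t + (R⁻¹ * Sᵀ).mulVec (xh t)) := by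
          rw [Matrix.mulVec_sub]; abel
        rw [heq]
        exact sub_ne_zero.mpr htne
      by_cases h0 : t = 0
      · exact Or.inr (by simp [h0])
      · left
        refine ⟨?_, lt_of_le_of_ne htIcc.1 (Ne.symm h0), htIcc.2⟩
        have hpos := hRpd.dotProduct_mulVec_pos hvne
        have hpos' : 0 < R.mulVec ((ut t - uh t) + (R⁻¹ * Sᵀ).mulVec (xt t - xh t)) ⬝ᵥ
            ((ut t - uh t) + (R⁻¹ * Sᵀ).mulVec (xt t - xh t)) := by
          simpa [dotProduct_comm] using hpos
        exact Function.mem_support.mpr hpos'.ne'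
    refine lt_of_lt_of_le hdiff (le_trans (measure_mono hsub)
      (le_trans (measure_union_le _ _) ?_))
    simp
  -- ∫ F > 0
  have hFpos : 0 < ∫ s in (0:ℝ)..T, (Q.mulVec (xt s - xh s) ⬝ᵥ (xt s - xh s)
      + 2 * (S.mulVec (ut s - uh s) ⬝ᵥ (xt s - xh s))
      + R.mulVec (ut s - uh s) ⬝ᵥ (ut s - uh s)) :=
    lt_of_lt_of_le hIntH
      (intervalIntegral.integral_mono_on hT.le hIH hIF (fun s _ => hFh s))
  -- integral identity
  have hkey : (∫ s in (0:ℝ)..T,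
        (Q.mulVec (lam • xt s + (1 - lam) • xh s) ⬝ᵥ (lam • xt s + (1 - lam) • xh s)
        + 2 * (S.mulVec (lam • ut s + (1 - lam) • uh s) ⬝ᵥ (lam • xt s + (1 - lam) • xh s))
        + R.mulVec (lam • ut s + (1 - lam) • uh s) ⬝ᵥ (lam • ut s + (1 - lam) • uh s)
        - 2 * (η ⬝ᵥ (lam • xt s + (1 - lam) • xh s))
        - 2 * (ζ ⬝ᵥ (lam • ut s + (1 - lam) • uh s))))
      = lam * (∫ s in (0:ℝ)..T, (Q.mulVec (xt s) ⬝ᵥ xt s + 2 * (S.mulVec (ut s) ⬝ᵥ xt s)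
          + R.mulVec (ut s) ⬝ᵥ ut s - 2 * (η ⬝ᵥ xt s) - 2 * (ζ ⬝ᵥ ut s)))
        + (1 - lam) * (∫ s in (0:ℝ)..T, (Q.mulVec (xh s) ⬝ᵥ xh s + 2 * (S.mulVec (uh s) ⬝ᵥ xh s)
          + R.mulVec (uh s) ⬝ᵥ uh s - 2 * (η ⬝ᵥ xh s) - 2 * (ζ ⬝ᵥ uh s)))
        - lam * (1 - lam) * (∫ s in (0:ℝ)..T, (Q.mulVec (xt s - xh s) ⬝ᵥ (xt s - xh s)
          + 2 * (S.mulVec (ut s - uh s) ⬝ᵥ (xt s - xh s))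
          + R.mulVec (ut s - uh s) ⬝ᵥ (ut s - uh s))) := by
    rw [← intervalIntegral.integral_const_mul lam, ← intervalIntegral.integral_const_mul (1 - lam),
      ← intervalIntegral.integral_const_mul (lam * (1 - lam)),
      ← intervalIntegral.integral_add (hIt.const_mul lam) (hIh.const_mul (1 - lam)),
      ← intervalIntegral.integral_sub ((hIt.const_mul lam).add (hIh.const_mul (1 - lam)))
        (hIF.const_mul (lam * (1 - lam)))]
    apply intervalIntegral.integral_congr
    intro s _
    exact stmt5_point_id Q S R η ζ lam (xt s) (xh s) (ut s) (uh s)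
  -- terminal identity
  have hterm : Qhat.mulVec (lam • xt T + (1 - lam) • xh T) ⬝ᵥ (lam • xt T + (1 - lam) • xh T)
      = lam * (Qhat.mulVec (xt T) ⬝ᵥ xt T) + (1 - lam) * (Qhat.mulVec (xh T) ⬝ᵥ xh T)
        - lam * (1 - lam) * (Qhat.mulVec (xt T - xh T) ⬝ᵥ (xt T - xh T)) := by
    have := stmt5_conv_id Qhat lam (xt T) (xh T) (xt T) (xh T)
    linarith
  have htermnn : 0 ≤ Qhat.mulVec (xt T - xh T) ⬝ᵥ (xt T - xh T) := by
    have := hQhat.dotProduct_mulVec_nonneg (xt T - xh T)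
    simpa [dotProduct_comm] using this
  -- conclusion
  have hll : 0 < lam * (1 - lam) := mul_pos hl0 (by linarith)
  have hP1 : 0 < lam * (1 - lam) * (∫ s in (0:ℝ)..T,
      (Q.mulVec (xt s - xh s) ⬝ᵥ (xt s - xh s)
        + 2 * (S.mulVec (ut s - uh s) ⬝ᵥ (xt s - xh s))
        + R.mulVec (ut s - uh s) ⬝ᵥ (ut s - uh s))) := mul_pos hll hFpos
  have hP2 : 0 ≤ lam * (1 - lam) * (Qhat.mulVec (xt T - xh T) ⬝ᵥ (xt T - xh T)) :=
    mul_nonneg hll.le htermnn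
  simp only [LamT]
  linarith [hkey, hterm, hP1, hP2]
end

section
/- Let T > 0, δ > 0, let A, Q be constant n×n real matrices with Q symmetric, Q̂ a symmetric n×n matrix, B an n×m matrix, S an n×m matrix, R an invertible m×m matrix, and σ : [0,T] → ℝ^{n×r} continuous. Suppose Π : [0,T] → ℝ^{n×n} is continuously differentiable, satisfies Π(T) = Q̂ and the Riccati equation Π'(t) + Π(t)A + Aᵀ Π(t) − (Π(t)B + S) R⁻¹ (Bᵀ Π(t) + Sᵀ) + Q + δ Π(t) σ(t) σ(t)ᵀ Π(t) = 0 on [0,T]. Define Â(t) = A − B R⁻¹ (Sᵀ + Bᵀ Π(t)) + δ σ(t) σ(t)ᵀ Π(t) and Q̃(t) = Q − S R⁻¹ (Sᵀ + Bᵀ Π(t)), let Υ be the fundamental matrix with Υ'(t) = Â(t)Υ(t), Υ(0) = I (so Υ(t) is invertible for all t), and set Z̃(t) = exp(−Aᵀ t) · (∫ₜᵀ exp(Aᵀ s) Q̃(s) Υ(s) ds + exp(Aᵀ T) Q̂ Υ(T)) · Υ(t)⁻¹. Then Z̃(t) = Π(t) for every t ∈ [0,T]. -/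
open Matrix Set MeasureTheory intervalIntegral

attribute [local instance] Matrix.normedAddCommGroup Matrix.normedSpace

section auxExp
variable {n : ℕ}

lemma stmt12_aux_slope (A : Matrix (Fin n) (Fin n) ℝ) (t : ℝ) :
    Filter.Tendsto (slope (fun s : ℝ => NormedSpace.exp (s • A)) t) (nhdsWithin t {t}ᶜ)
      (nhds (A * NormedSpace.exp (t • A))) := by
  letI : NormedRing (Matrix (Fin n) (Fin n) ℝ) := Matrix.linftyOpNormedRing
  letI : NormedAlgebra ℝ (Matrix (Fin n) (Fin n) ℝ) := Matrix.linftyOpNormedAlgebra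
  letI : NormedAddCommGroup (Matrix (Fin n) (Fin n) ℝ) :=
    NonUnitalNormedRing.toNormedAddCommGroup
  letI : NormedSpace ℝ (Matrix (Fin n) (Fin n) ℝ) := NormedAlgebra.toNormedSpace _
  exact hasDerivAt_iff_tendsto_slope.mp (hasDerivAt_exp_smul_const' A t)

lemma stmt12_aux_slope' (A : Matrix (Fin n) (Fin n) ℝ) (t : ℝ) :
    Filter.Tendsto (slope (fun s : ℝ => NormedSpace.exp (s • A)) t) (nhdsWithin t {t}ᶜ)
      (nhds (NormedSpace.exp (t • A) * A)) := by
  letI : NormedRing (Matrix (Fin n) (Fin n) ℝ) := Matrix.linftyOpNormedRing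
  letI : NormedAlgebra ℝ (Matrix (Fin n) (Fin n) ℝ) := Matrix.linftyOpNormedAlgebra
  letI : NormedAddCommGroup (Matrix (Fin n) (Fin n) ℝ) :=
    NonUnitalNormedRing.toNormedAddCommGroup
  letI : NormedSpace ℝ (Matrix (Fin n) (Fin n) ℝ) := NormedAlgebra.toNormedSpace _
  exact hasDerivAt_iff_tendsto_slope.mp (hasDerivAt_exp_smul_const A t)
end auxExp

section helpers
variable {n : ℕ}

lemma stmt12_expD (A : Matrix (Fin n) (Fin n) ℝ) (t : ℝ) :
    HasDerivAt (fun s : ℝ => NormedSpace.exp (s • A)) (A * NormedSpace.exp (t • A)) t :=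
  hasDerivAt_iff_tendsto_slope.mpr (stmt12_aux_slope A t)

lemma stmt12_expD' (A : Matrix (Fin n) (Fin n) ℝ) (t : ℝ) :
    HasDerivAt (fun s : ℝ => NormedSpace.exp (s • A)) (NormedSpace.exp (t • A) * A) t :=
  hasDerivAt_iff_tendsto_slope.mpr (stmt12_aux_slope' A t)

lemma stmt12_expInv (A : Matrix (Fin n) (Fin n) ℝ) (t : ℝ) :
    NormedSpace.exp ((-t) • A) * NormedSpace.exp (t • A) = 1 := by
  have h := Matrix.exp_add_of_commute ((-t) • A) (t • A)
    (((Commute.refl A).smul_left (-t)).smul_right t)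
  rw [← add_smul, neg_add_cancel, zero_smul, NormedSpace.exp_zero] at h
  exact h.symm

noncomputable def stmt12mulCLM (n : ℕ) :
    Matrix (Fin n) (Fin n) ℝ →L[ℝ] Matrix (Fin n) (Fin n) ℝ →L[ℝ] Matrix (Fin n) (Fin n) ℝ :=
  LinearMap.toContinuousLinearMap
    { toFun := fun X => LinearMap.toContinuousLinearMap (LinearMap.mulLeft ℝ X)
      map_add' := by intro X Y; ext Z; simp [add_mul]
      map_smul' := by intro c X; ext Z; simp [smul_mul_assoc] }

@[simp] lemma stmt12mulCLM_apply (X Y : Matrix (Fin n) (Fin n) ℝ) :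
    stmt12mulCLM n X Y = X * Y := rfl

theorem HasDerivWithinAt.stmt12matmul {f g : ℝ → Matrix (Fin n) (Fin n) ℝ}
    {f' g' : Matrix (Fin n) (Fin n) ℝ} {s : Set ℝ} {x : ℝ}
    (hf : HasDerivWithinAt f f' s x) (hg : HasDerivWithinAt g g' s x) :
    HasDerivWithinAt (fun t => f t * g t) (f' * g x + f x * g') s x := by
  letI : NormedRing (Matrix (Fin n) (Fin n) ℝ) := Matrix.linftyOpNormedRing
  letI : NormedAlgebra ℝ (Matrix (Fin n) (Fin n) ℝ) := Matrix.linftyOpNormedAlgebra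
  exact hf.mul hg

noncomputable def stmt12mvCLM (n : ℕ) :
    Matrix (Fin n) (Fin n) ℝ →L[ℝ] (Fin n → ℝ) →L[ℝ] (Fin n → ℝ) :=
  LinearMap.toContinuousLinearMap
    { toFun := fun M => LinearMap.toContinuousLinearMap (Matrix.mulVecLin M)
      map_add' := by intro X Y; ext v; simp [Matrix.add_mulVec]
      map_smul' := by intro c X; ext v; simp [Matrix.smul_mulVec] }

@[simp] lemma stmt12mvCLM_apply (X : Matrix (Fin n) (Fin n) ℝ) (v : Fin n → ℝ) :
    stmt12mvCLM n X v = X.mulVec v := rfl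

theorem stmt12_isUnit_Y {n : ℕ} {T : ℝ}
    (Ahat : ℝ → Matrix (Fin n) (Fin n) ℝ) (hAcont : ContinuousOn Ahat (Icc 0 T))
    (Y : ℝ → Matrix (Fin n) (Fin n) ℝ)
    (hY : ∀ t ∈ Icc (0 : ℝ) T, HasDerivWithinAt Y (Ahat t * Y t) (Icc 0 T) t)
    (hY0 : Y 0 = 1) {t : ℝ} (ht : t ∈ Icc (0 : ℝ) T) : IsUnit (Y t) := by
  rcases eq_or_lt_of_le ht.1 with h0 | h0
  · rw [← h0, hY0]; exact isUnit_one
  have hker : ∀ c : Fin n → ℝ, (Y t).mulVec c = 0 → c = 0 := by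
    intro c hc
    set clamp : ℝ → ℝ := fun s => max 0 (min s t) with hclamp
    have hclamp_mem : ∀ s, clamp s ∈ Icc (0 : ℝ) T := fun s =>
      ⟨le_max_left _ _, max_le (ht.1.trans ht.2) ((min_le_right _ _).trans ht.2)⟩
    have hclamp_eq : ∀ s ∈ Icc (0 : ℝ) t, clamp s = s := fun s hs => by
      simp [hclamp, min_eq_left hs.2, max_eq_right hs.1]
    obtain ⟨C, hC⟩ := (isCompact_Icc (a := (0:ℝ)) (b := T)).exists_bound_of_continuousOn
      ((stmt12mvCLM n).continuous.comp_continuousOn hAcont)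
    set K : NNReal := ⟨max C 0, le_max_right _ _⟩ with hK
    have hv : ∀ s : ℝ, LipschitzOnWith K (fun x => stmt12mvCLM n (Ahat (clamp s)) x) univ := by
      intro s
      refine ((stmt12mvCLM n (Ahat (clamp s))).lipschitz.weaken ?_).lipschitzOnWith
      rw [← NNReal.coe_le_coe]
      exact (hC _ (hclamp_mem s)).trans (le_max_left _ _)
    have hIcc : Icc (0 : ℝ) t ⊆ Icc 0 T := Icc_subset_Icc le_rfl ht.2
    have hYc : ContinuousOn Y (Icc 0 T) := fun s hs => (hY s hs).continuousWithinAt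
    have hfl : ∀ M : Matrix (Fin n) (Fin n) ℝ, (stmt12mvCLM n).flip c M = M.mulVec c := fun M => rfl
    have hfc : ContinuousOn (fun s => (Y s).mulVec c) (Icc 0 t) := by
      have : ContinuousOn (fun s => ((stmt12mvCLM n).flip c) (Y s)) (Icc 0 t) :=
        ((stmt12mvCLM n).flip c).continuous.comp_continuousOn (hYc.mono hIcc)
      simpa [hfl] using this
    have heq := ODE_solution_unique_of_mem_Icc_left
      (v := fun s x => stmt12mvCLM n (Ahat (clamp s)) x)
      (s := fun _ => univ) (K := K) (a := 0) (b := t)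
      (g := fun _ => (0 : Fin n → ℝ)) (fun s _ => hv s) hfc
      (fun s hs => by
        have hsT : s ∈ Icc (0 : ℝ) T := ⟨hs.1.le, hs.2.trans ht.2⟩
        have h1 : HasDerivWithinAt (fun u => ((stmt12mvCLM n).flip c) (Y u))
            (((stmt12mvCLM n).flip c) (Ahat s * Y s)) (Icc 0 T) s :=
          ((stmt12mvCLM n).flip c).hasFDerivAt.comp_hasDerivWithinAt s (hY s hsT)
        have h2 := h1.mono_of_mem_nhdsWithin
          (Icc_mem_nhdsLE_of_mem (⟨hs.1, hsT.2⟩ : s ∈ Ioc (0:ℝ) T))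
        have h3 : ((stmt12mvCLM n).flip c) (Ahat s * Y s)
            = stmt12mvCLM n (Ahat (clamp s)) ((Y s).mulVec c) := by
          simp [hfl, hclamp_eq s ⟨hs.1.le, hs.2⟩, Matrix.mulVec_mulVec]
        simpa [h3, hfl] using h2)
      (fun _ _ => mem_univ _)
      continuousOn_const
      (fun s hs => by
        simp only [stmt12mvCLM_apply, Matrix.mulVec_zero]
        exact hasDerivWithinAt_const s (Iic s) (0 : Fin n → ℝ))
      (fun _ _ => mem_univ _) (by simpa using hc)
    have h00 := heq (left_mem_Icc.mpr h0.le)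
    simpa [hY0, Matrix.one_mulVec] using h00
  rw [← Matrix.mulVec_injective_iff_isUnit]
  intro x y hxy
  have h := hker (x - y) (by rw [Matrix.mulVec_sub, hxy, sub_self])
  exact sub_eq_zero.mp h

end helpers

/-- identification of the martingale-representation coefficient
with the Riccati solution: if `Π` solves the risk-sensitive Riccati equation
with `Π(T) = Q̂` and `Υ` is the fundamental matrix of `Â(t)`, then
`Z̃(t) = e^{−Aᵀt}(∫ₜᵀ e^{Aᵀs} Q̃(s) Υ(s) ds + e^{AᵀT} Q̂ Υ(T)) Υ(t)⁻¹ = Π(t)`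
on `[0,T]`. -/
theorem stmt12 {n m r : ℕ} (T : ℝ) (hT : 0 < T) (δ : ℝ) (hδ : 0 < δ)
    (A Q : Matrix (Fin n) (Fin n) ℝ) (hQsymm : Q.IsSymm)
    (Qhat : Matrix (Fin n) (Fin n) ℝ) (hQhatsymm : Qhat.IsSymm)
    (B S : Matrix (Fin n) (Fin m) ℝ)
    (R : Matrix (Fin m) (Fin m) ℝ) (hR : IsUnit R)
    (σ : ℝ → Matrix (Fin n) (Fin r) ℝ) (hσ : ContinuousOn σ (Icc 0 T))
    (Pmat Pmat' : ℝ → Matrix (Fin n) (Fin n) ℝ)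
    (hPdiff : ∀ t ∈ Icc (0 : ℝ) T, HasDerivWithinAt Pmat (Pmat' t) (Icc 0 T) t)
    (hP'cont : ContinuousOn Pmat' (Icc 0 T))
    (hPT : Pmat T = Qhat)
    (hric : ∀ t ∈ Icc (0 : ℝ) T,
      Pmat' t + Pmat t * A + Aᵀ * Pmat t
        - (Pmat t * B + S) * R⁻¹ * (Bᵀ * Pmat t + Sᵀ) + Q
        + δ • (Pmat t * σ t * (σ t)ᵀ * Pmat t) = 0)
    (Ahat : ℝ → Matrix (Fin n) (Fin n) ℝ)
    (hAhat : ∀ t, Ahat t = A - B * R⁻¹ * (Sᵀ + Bᵀ * Pmat t) + δ • (σ t * (σ t)ᵀ * Pmat t))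
    (Qtilde : ℝ → Matrix (Fin n) (Fin n) ℝ)
    (hQtilde : ∀ t, Qtilde t = Q - S * R⁻¹ * (Sᵀ + Bᵀ * Pmat t))
    (Y : ℝ → Matrix (Fin n) (Fin n) ℝ)
    (hY : ∀ t ∈ Icc (0 : ℝ) T, HasDerivWithinAt Y (Ahat t * Y t) (Icc 0 T) t)
    (hY0 : Y 0 = 1)
    (Ztilde : ℝ → Matrix (Fin n) (Fin n) ℝ)
    (hZtilde : ∀ t, Ztilde t
      = NormedSpace.exp ((-t) • Aᵀ)
        * ((∫ s in t..T, NormedSpace.exp (s • Aᵀ) * Qtilde s * Y s)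
            + NormedSpace.exp (T • Aᵀ) * Qhat * Y T)
        * (Y t)⁻¹) :
    ∀ t ∈ Icc (0 : ℝ) T, Ztilde t = Pmat t := by
  -- continuity facts
  have hPc : ContinuousOn Pmat (Icc 0 T) := fun s hs => (hPdiff s hs).continuousWithinAt
  have hYc : ContinuousOn Y (Icc 0 T) := fun s hs => (hY s hs).continuousWithinAt
  have hφ : Continuous fun P : Matrix (Fin n) (Fin n) ℝ => Q - S * R⁻¹ * (Sᵀ + Bᵀ * P) :=
    continuous_const.sub (continuous_const.matrix_mul
      (continuous_const.add (continuous_const.matrix_mul continuous_id)))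
  have hQtc : ContinuousOn Qtilde (Icc 0 T) :=
    (hφ.comp_continuousOn hPc).congr fun s _ => hQtilde s
  have hψ : Continuous fun p : Matrix (Fin n) (Fin n) ℝ × Matrix (Fin n) (Fin r) ℝ =>
      A - B * R⁻¹ * (Sᵀ + Bᵀ * p.1) + δ • (p.2 * p.2ᵀ * p.1) :=
    (continuous_const.sub (continuous_const.matrix_mul
        (continuous_const.add (continuous_const.matrix_mul continuous_fst)))).add
      (((continuous_snd.matrix_mul continuous_snd.matrix_transpose).matrix_mul
        continuous_fst).const_smul δ)
  have hAhc : ContinuousOn Ahat (Icc 0 T) :=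
    (hψ.comp_continuousOn (hPc.prodMk hσ)).congr fun s _ => hAhat s
  have hEc : Continuous fun s : ℝ => NormedSpace.exp (s • Aᵀ) :=
    continuous_iff_continuousAt.mpr fun s => (stmt12_expD Aᵀ s).continuousAt
  have mulmap : Continuous fun p : Matrix (Fin n) (Fin n) ℝ × Matrix (Fin n) (Fin n) ℝ =>
      p.1 * p.2 := continuous_fst.matrix_mul continuous_snd
  -- key algebraic identity
  have key : ∀ s ∈ Icc (0 : ℝ) T,
      Aᵀ * Pmat s + Pmat' s + Pmat s * Ahat s = -(Qtilde s) := by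
    intro s hs
    have h := hric s hs
    rw [hAhat, hQtilde, ← sub_eq_zero, ← h]
    simp only [Matrix.mul_add, Matrix.add_mul, Matrix.mul_sub, Matrix.sub_mul, Matrix.mul_smul,
      Matrix.smul_mul, mul_add, add_mul, mul_sub, sub_mul, mul_smul_comm, smul_mul_assoc,
      Matrix.mul_assoc, mul_assoc]
    abel
  -- derivative of M
  have hM' : ∀ s ∈ Icc (0 : ℝ) T,
      HasDerivWithinAt (fun u => NormedSpace.exp (u • Aᵀ) * (Pmat u * Y u))
        (-(NormedSpace.exp (s • Aᵀ) * (Qtilde s * Y s))) (Icc 0 T) s := by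
    intro s hs
    have h1 := ((stmt12_expD' Aᵀ s).hasDerivWithinAt).stmt12matmul
      ((hPdiff s hs).stmt12matmul (hY s hs))
    have h2 : NormedSpace.exp (s • Aᵀ) * Aᵀ * (Pmat s * Y s)
        + NormedSpace.exp (s • Aᵀ) * (Pmat' s * Y s + Pmat s * (Ahat s * Y s))
        = -(NormedSpace.exp (s • Aᵀ) * (Qtilde s * Y s)) := by
      have h3 : NormedSpace.exp (s • Aᵀ) * Aᵀ * (Pmat s * Y s)
          + NormedSpace.exp (s • Aᵀ) * (Pmat' s * Y s + Pmat s * (Ahat s * Y s))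
          = NormedSpace.exp (s • Aᵀ)
            * ((Aᵀ * Pmat s + Pmat' s + Pmat s * Ahat s) * Y s) := by
        simp only [mul_add, add_mul, mul_assoc]
        abel
      rw [h3, key s hs]
      simp [neg_mul, mul_neg]
    rw [← h2]
    exact h1
  intro t ht
  have htT : t ≤ T := ht.2
  have hsub : Icc t T ⊆ Icc 0 T := Icc_subset_Icc ht.1 le_rfl
  -- FTC
  have hcontM : ContinuousOn (fun u => NormedSpace.exp (u • Aᵀ) * (Pmat u * Y u)) (Icc t T) :=
    fun s hs => ((hM' s (hsub hs)).continuousWithinAt).mono hsub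
  have hderiv : ∀ x ∈ Ioo t T,
      HasDerivWithinAt (fun u => NormedSpace.exp (u • Aᵀ) * (Pmat u * Y u))
        (-(NormedSpace.exp (x • Aᵀ) * (Qtilde x * Y x))) (Ioi x) x := fun x hx =>
    (hM' x (hsub (Ioo_subset_Icc_self hx))).mono_of_mem_nhdsWithin
      (Icc_mem_nhdsGT_of_mem ⟨ht.1.trans hx.1.le, hx.2⟩)
  have hQY : ContinuousOn (fun s => Qtilde s * Y s) (Icc t T) :=
    mulmap.comp_continuousOn ((hQtc.mono hsub).prodMk (hYc.mono hsub))
  have hEQY : ContinuousOn (fun s => NormedSpace.exp (s • Aᵀ) * (Qtilde s * Y s)) (Icc t T) :=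
    mulmap.comp_continuousOn (hEc.continuousOn.prodMk hQY)
  have hint : @IntervalIntegrable (Matrix (Fin n) (Fin n) ℝ) _ NormedAddGroup.toENormedAddMonoid (fun s => -(NormedSpace.exp (s • Aᵀ) * (Qtilde s * Y s)))
      volume t T := by
    apply ContinuousOn.intervalIntegrable
    rw [uIcc_of_le htT]
    exact hEQY.neg
  have hFTC := intervalIntegral.integral_eq_sub_of_hasDeriv_right_of_le htT hcontM hderiv hint
  -- rearrange
  have harr : (∫ s in t..T, NormedSpace.exp (s • Aᵀ) * Qtilde s * Y s)
      + NormedSpace.exp (T • Aᵀ) * Qhat * Y T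
      = NormedSpace.exp (t • Aᵀ) * (Pmat t * Y t) := by
    have e1 : (∫ s in t..T, NormedSpace.exp (s • Aᵀ) * Qtilde s * Y s)
        = ∫ s in t..T, NormedSpace.exp (s • Aᵀ) * (Qtilde s * Y s) :=
      intervalIntegral.integral_congr fun s _ => by rw [mul_assoc]
    have e2 : (∫ s in t..T, NormedSpace.exp (s • Aᵀ) * (Qtilde s * Y s))
        = NormedSpace.exp (t • Aᵀ) * (Pmat t * Y t)
          - NormedSpace.exp (T • Aᵀ) * (Pmat T * Y T) := by
      rw [← neg_neg (∫ s in t..T, NormedSpace.exp (s • Aᵀ) * (Qtilde s * Y s)),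
        ← intervalIntegral.integral_neg, hFTC]
      abel
    rw [e1, e2, hPT]
    rw [mul_assoc]
    abel
  rw [hZtilde t, harr]
  have hu := stmt12_isUnit_Y Ahat hAhc Y hY hY0 ht
  have hYinv : Y t * (Y t)⁻¹ = 1 :=
    Matrix.mul_nonsing_inv _ ((Matrix.isUnit_iff_isUnit_det _).mp hu)
  rw [← mul_assoc, ← mul_assoc, stmt12_expInv Aᵀ t, one_mul, mul_assoc, hYinv, mul_one]
end
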